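/- Let n ≥ 1. For all real n×n orthogonal matrices A, B with det(A) = 1 and det(B) = −1, one has ‖A − B‖_F ≥ 2; moreover there exist orthogonal A, B with det(A) = 1, det(B) = −1 and ‖A − B‖_F = 2. That is, the Frobenius distance between SO(n) and SO⁻(n) equals 2. -/

import Mathlib

open Matrix


lemma dotProduct_self_nonneg' {n : ℕ} (w : Fin n → ℝ) : 0 ≤ w ⬝ᵥ w :=
  Finset.sum_nonneg fun i _ => mul_self_nonneg (w i)

lemma rayleigh_le {n : ℕ} (Q : Matrix (Fin n) (Fin n) ℝ) (hQ : Qᵀ * Q = 1)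
    (w : Fin n → ℝ) : w ⬝ᵥ (Q *ᵥ w) ≤ w ⬝ᵥ w := by
  have hnorm : (Q *ᵥ w) ⬝ᵥ (Q *ᵥ w) = w ⬝ᵥ w := by
    rw [Matrix.dotProduct_mulVec, ← Matrix.mulVec_transpose, Matrix.mulVec_mulVec, hQ,
      Matrix.one_mulVec, dotProduct_comm]
  have hcs : (w ⬝ᵥ (Q *ᵥ w)) ^ 2 ≤ (w ⬝ᵥ w) * ((Q *ᵥ w) ⬝ᵥ (Q *ᵥ w)) := by
    have := Finset.sum_mul_sq_le_sq_mul_sq Finset.univ w (Q *ᵥ w)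
    simpa [dotProduct, pow_two, mul_comm, mul_assoc, mul_left_comm, sq] using this
  rw [hnorm] at hcs
  nlinarith [dotProduct_self_nonneg' w]

lemma trace_le_of_det_neg_one {n : ℕ} (Q : Matrix (Fin n) (Fin n) ℝ)
    (hQ : Qᵀ * Q = 1) (hdet : Q.det = -1) : Matrix.trace Q ≤ (n : ℝ) - 2 := by
  have hQQt : Q * Qᵀ = 1 := mul_eq_one_comm.mp hQ
  have hfac : Q + 1 = Q * (1 + Qᵀ) := by rw [mul_add, mul_one, hQQt]
  have hdet0 : (Q + 1).det = 0 := by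
    have h1 : (Q + 1).det = -(Q + 1).det := by
      calc (Q + 1).det = Q.det * (1 + Qᵀ).det := by rw [hfac, det_mul]
        _ = -((1 + Q)ᵀ).det := by rw [hdet, transpose_add, transpose_one]; ring
        _ = -(Q + 1).det := by rw [det_transpose, add_comm]
    linarith
  obtain ⟨v, hv0, hv⟩ := (Matrix.exists_mulVec_eq_zero_iff).mpr hdet0
  rw [add_mulVec, one_mulVec] at hv
  have hQv : Q *ᵥ v = -v := by linear_combination (norm := module) hv
  -- normalize
  have hvv : 0 < v ⬝ᵥ v := by
    rcases lt_or_eq_of_le (dotProduct_self_nonneg' v) with h | h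
    · exact h
    · exact absurd ((dotProduct_self_eq_zero).mp h.symm) hv0
  set u : Fin n → ℝ := (Real.sqrt (v ⬝ᵥ v))⁻¹ • v with hu
  have huu : u ⬝ᵥ u = 1 := by
    have hs : (0:ℝ) < Real.sqrt (v ⬝ᵥ v) := Real.sqrt_pos.mpr hvv
    have h2 : Real.sqrt (v ⬝ᵥ v) * Real.sqrt (v ⬝ᵥ v) = v ⬝ᵥ v := Real.mul_self_sqrt hvv.le
    rw [hu, smul_dotProduct, dotProduct_smul, smul_eq_mul, smul_eq_mul]
    field_simp
    rw [sq, h2]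
  have hQu : Q *ᵥ u = -u := by
    rw [hu, Matrix.mulVec_smul, hQv, smul_neg]
  set P : Matrix (Fin n) (Fin n) ℝ := vecMulVec u u with hP
  set M : Matrix (Fin n) (Fin n) ℝ := 1 - P with hM
  have hPP : P * P = P := by
    ext i j
    simp only [hP, mul_apply, vecMulVec_apply]
    have : ∑ k, u i * u k * (u k * u j) = (u i * u j) * ∑ k, u k * u k := by
      rw [Finset.mul_sum]; exact Finset.sum_congr rfl fun k _ => by ring
    rw [this, show ∑ k, u k * u k = u ⬝ᵥ u from rfl, huu, mul_one]
  have hPsymm : Pᵀ = P := by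
    ext i j
    simp only [hP, transpose_apply, vecMulVec_apply]
    ring
  have hMsymm : Mᵀ = M := by
    rw [hM, transpose_sub, transpose_one, hPsymm]
  have hMM : M * M = M := by
    rw [hM, sub_mul, one_mul, mul_sub, mul_one, hPP]
    abel
  -- trace (Q * P) = -1
  have htQP : Matrix.trace (Q * P) = -1 := by
    have h1 : Matrix.trace (Q * P) = u ⬝ᵥ (Q *ᵥ u) := by
      simp only [Matrix.trace, Matrix.diag, mul_apply, vecMulVec_apply, dotProduct,
        Matrix.mulVec, hP]
      exact Finset.sum_congr rfl fun i _ => by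
        rw [Finset.mul_sum]; exact Finset.sum_congr rfl fun j _ => by ring
    rw [h1, hQu, dotProduct_neg, huu]
  -- trace decomposition
  have hsplit : Matrix.trace Q = Matrix.trace (Q * M) + Matrix.trace (Q * P) := by
    rw [← Matrix.trace_add, ← mul_add, hM]
    simp
  -- trace (Q*M) = trace (M*Q*M)
  have hcyc : Matrix.trace (Q * M) = Matrix.trace (M * Q * M) := by
    conv_lhs => rw [← hMM, ← mul_assoc, Matrix.trace_mul_comm (Q * M) M, ← mul_assoc]
  -- diagonal entries
  have hdiag : ∀ i, (M * Q * M) i i = (M i) ⬝ᵥ (Q *ᵥ (M i)) := by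
    intro i
    rw [mul_assoc]
    show ∑ k, M i k * (Q * M) k i = _
    simp only [mul_apply, dotProduct, Matrix.mulVec]
    refine Finset.sum_congr rfl fun k _ => ?_
    congr 1
    refine Finset.sum_congr rfl fun j _ => ?_
    congr 1
    exact congrFun (congrFun hMsymm i) j
  have hbound : Matrix.trace (M * Q * M) ≤ ∑ i, (M i) ⬝ᵥ (M i) := by
    rw [Matrix.trace]
    refine Finset.sum_le_sum fun i _ => ?_
    rw [Matrix.diag, hdiag i]
    exact rayleigh_le Q hQ (M i)
  have hsum : ∑ i, (M i) ⬝ᵥ (M i) = Matrix.trace (M * Mᵀ) := by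
    simp [Matrix.trace, Matrix.diag, mul_apply, dotProduct, transpose_apply]
  have htM : Matrix.trace M = (n : ℝ) - 1 := by
    rw [hM, Matrix.trace_sub, Matrix.trace_one]
    have : Matrix.trace P = 1 := by
      simp only [hP, Matrix.trace, Matrix.diag, vecMulVec_apply]
      exact huu
    rw [this]
    simp
  have : Matrix.trace (M * Mᵀ) = (n : ℝ) - 1 := by rw [hMsymm, hMM, htM]
  rw [hsplit, htQP, hcyc]
  rw [hsum, this] at hbound
  linarith

/-- The Frobenius norm of a real square matrix: `‖A‖_F = (trace (Aᵀ * A))^(1/2)`. -/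
noncomputable def frobNorm {n : ℕ} (A : Matrix (Fin n) (Fin n) ℝ) : ℝ :=
  Real.sqrt (Matrix.trace (Aᵀ * A))

/-- The Frobenius distance between `SO(n)` and `SO⁻(n)` equals `2`:
any `A ∈ SO(n)`, `B ∈ SO⁻(n)` satisfy `‖A - B‖_F ≥ 2`, and the value `2` is attained. -/
theorem dist_SO_SOneg_eq_two (n : ℕ) (hn : 1 ≤ n) :
    (∀ A B : Matrix (Fin n) (Fin n) ℝ, Aᵀ * A = 1 → Bᵀ * B = 1 →
      A.det = 1 → B.det = -1 → 2 ≤ frobNorm (A - B)) ∧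
    (∃ A B : Matrix (Fin n) (Fin n) ℝ, Aᵀ * A = 1 ∧ Bᵀ * B = 1 ∧
      A.det = 1 ∧ B.det = -1 ∧ frobNorm (A - B) = 2) := by
  constructor
  · intro A B hA hB dA dB
    set Q : Matrix (Fin n) (Fin n) ℝ := Aᵀ * B with hQdef
    have hAAt : A * Aᵀ = 1 := mul_eq_one_comm.mp hA
    have hQorth : Qᵀ * Q = 1 := by
      rw [hQdef, transpose_mul, transpose_transpose, mul_assoc, ← mul_assoc A, hAAt,
        one_mul, hB]
    have hQdet : Q.det = -1 := by
      rw [hQdef, det_mul, det_transpose, dA, one_mul, dB]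
    have htr : Matrix.trace Q ≤ (n : ℝ) - 2 := trace_le_of_det_neg_one Q hQorth hQdet
    have hexp : Matrix.trace ((A - B)ᵀ * (A - B)) = 2 * n - 2 * Matrix.trace Q := by
      have h1 : (A - B)ᵀ * (A - B) = Aᵀ * A - Aᵀ * B - Bᵀ * A + Bᵀ * B := by
        rw [transpose_sub]
        noncomm_ring
      have h2 : Matrix.trace (Bᵀ * A) = Matrix.trace Q := by
        rw [hQdef, ← Matrix.trace_transpose (Bᵀ * A), transpose_mul, transpose_transpose]
      rw [h1, Matrix.trace_add, Matrix.trace_sub, Matrix.trace_sub, hA, hB, h2,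
        Matrix.trace_one, hQdef]
      simp
      ring
    have h4 : (4:ℝ) ≤ Matrix.trace ((A - B)ᵀ * (A - B)) := by
      rw [hexp]; linarith
    rw [frobNorm]
    rw [show (2:ℝ) = Real.sqrt 4 by
      rw [show (4:ℝ) = 2^2 by norm_num, Real.sqrt_sq (by norm_num)]]
    exact Real.sqrt_le_sqrt h4
  · haveI : NeZero n := ⟨by omega⟩
    set f : Fin n → ℝ := fun i => if i = 0 then -1 else 1 with hf
    refine ⟨1, Matrix.diagonal f, by simp, ?_, by simp, ?_, ?_⟩
    · rw [Matrix.diagonal_transpose, Matrix.diagonal_mul_diagonal]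
      rw [show (fun i => f i * f i) = fun _ => (1:ℝ) by
        funext i; by_cases h : i = 0 <;> simp [hf, h]]
      exact Matrix.diagonal_one
    · rw [Matrix.det_diagonal, hf]
      simp [Finset.prod_ite_eq']
    · have hsub : (1 : Matrix (Fin n) (Fin n) ℝ) - Matrix.diagonal f
          = Matrix.diagonal (fun i => 1 - f i) := by
        rw [← Matrix.diagonal_one, Matrix.diagonal_sub]
      rw [frobNorm, hsub, Matrix.diagonal_transpose, Matrix.diagonal_mul_diagonal,
        Matrix.trace_diagonal]
      rw [show ∑ i, (1 - f i) * (1 - f i) = (4:ℝ) by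
        have h4 : ∀ i : Fin n, (1 - f i) * (1 - f i) = if i = 0 then (4:ℝ) else 0 := fun i => by
          by_cases h : i = 0 <;> simp [hf, h] <;> ring
        rw [Finset.sum_congr rfl fun i _ => h4 i, Finset.sum_ite_eq']
        simp]
      rw [show (4:ℝ) = 2^2 by norm_num, Real.sqrt_sq (by norm_num)]
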